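/- arXiv:2004.04575 — 5 statements merged into one kernel-verified Lean document; each statement's English description precedes it below -/
import Mathlib

section
/- Let M ≥ 1 and let δ : ℤ → ℝ be a sequence with δ n > 0 for all n that satisfies the quasisymmetric shear condition with constant M. Then the piecewise linear developing map h_δ satisfies the M′-quasisymmetry condition with M′ = max(3M³, M¹⁰); that is, for every x ∈ ℝ and every t > 0, 1/M′ ≤ (h_δ(x+t) − h_δ(x))/(h_δ(x) − h_δ(x−t)) ≤ M′. -/
/-- `Hmap δ n` is the value at the integer `n` of the developing map:
`H 0 = 0`, `H (n+1) = H n + δ n`. -/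
noncomputable def Hmap (δ : ℤ → ℝ) (n : ℤ) : ℝ :=
  if 0 ≤ n then ∑ j ∈ Finset.range n.toNat, δ j
  else -∑ j ∈ Finset.range (-n).toNat, δ (n + j)

/-- The piecewise linear developing map associated to the sequence `δ`. -/
noncomputable def hdev (δ : ℤ → ℝ) (x : ℝ) : ℝ :=
  Hmap δ ⌊x⌋ + δ ⌊x⌋ * (x - (⌊x⌋ : ℝ))

/-- The quasisymmetric shear condition with constant `M` for a positive sequence `δ`:
`1/M ≤ (δ m + ⋯ + δ (m+k)) / (δ (m-1) + ⋯ + δ (m-k-1)) ≤ M`. -/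
def ShearQS (δ : ℤ → ℝ) (M : ℝ) : Prop :=
  ∀ (m : ℤ) (k : ℕ),
    1 / M ≤ (∑ i ∈ Finset.range (k + 1), δ (m + (i : ℤ))) /
        (∑ i ∈ Finset.range (k + 1), δ (m - 1 - (i : ℤ))) ∧
      (∑ i ∈ Finset.range (k + 1), δ (m + (i : ℤ))) /
        (∑ i ∈ Finset.range (k + 1), δ (m - 1 - (i : ℤ))) ≤ M

/-- The `M`-quasisymmetry condition for a map `h : ℝ → ℝ`. -/
def QSCond (h : ℝ → ℝ) (M : ℝ) : Prop :=
  ∀ (x t : ℝ), 0 < t →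
    1 / M ≤ (h (x + t) - h x) / (h x - h (x - t)) ∧
      (h (x + t) - h x) / (h x - h (x - t)) ≤ M

noncomputable def Gs (δ : ℤ → ℝ) (m : ℤ) (l : ℕ) : ℝ :=
  ∑ i ∈ Finset.range l, δ (m + (i : ℤ))

lemma Gs_zero (δ : ℤ → ℝ) (m : ℤ) : Gs δ m 0 = 0 := by simp [Gs]

lemma Gs_one (δ : ℤ → ℝ) (m : ℤ) : Gs δ m 1 = δ m := by simp [Gs]

lemma Gs_succ (δ : ℤ → ℝ) (m : ℤ) (l : ℕ) :
    Gs δ m (l + 1) = Gs δ m l + δ (m + (l : ℤ)) := by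
  simp [Gs, Finset.sum_range_succ]

lemma Gs_cons (δ : ℤ → ℝ) (m : ℤ) (l : ℕ) :
    Gs δ m (l + 1) = δ m + Gs δ (m + 1) l := by
  rw [Gs, Finset.sum_range_succ']
  rw [add_comm]
  congr 1
  · simp
  · apply Finset.sum_congr rfl
    intro i _
    congr 1
    push_cast
    ring

lemma Gs_nonneg (δ : ℤ → ℝ) (hpos : ∀ n, 0 < δ n) (m : ℤ) (l : ℕ) :
    0 ≤ Gs δ m l :=
  Finset.sum_nonneg fun i _ => (hpos _).le

lemma Gs_pos (δ : ℤ → ℝ) (hpos : ∀ n, 0 < δ n) (m : ℤ) (l : ℕ) (hl : 1 ≤ l) :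
    0 < Gs δ m l := by
  obtain ⟨k, rfl⟩ : ∃ k, l = k + 1 := ⟨l - 1, by omega⟩
  rw [Gs_cons]
  have := Gs_nonneg δ hpos (m + 1) k
  linarith [hpos m]

lemma Hmap_succ (δ : ℤ → ℝ) (n : ℤ) : Hmap δ (n + 1) = Hmap δ n + δ n := by
  unfold Hmap
  rcases le_or_gt 0 n with h | h
  · rw [if_pos (by omega), if_pos h]
    have h1 : (n + 1).toNat = n.toNat + 1 := by omega
    rw [h1, Finset.sum_range_succ]
    congr 2
    omega
  · rcases eq_or_lt_of_le (by omega : n + 1 ≤ 0) with h1 | h1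
    · have hn : n = -1 := by omega
      subst hn
      norm_num [Finset.sum_range_one]
    · rw [if_neg (by omega), if_neg (by omega)]
      have h2 : (-n).toNat = (-(n + 1)).toNat + 1 := by omega
      rw [h2, Finset.sum_range_succ']
      push_cast
      have : ∀ i ∈ Finset.range (-(n+1)).toNat, δ (n + ((i:ℤ) + 1)) = δ (n + 1 + (i:ℤ)) := by
        intro i _
        congr 1
        ring
      rw [Finset.sum_congr rfl this]
      ring_nf

lemma Hmap_add (δ : ℤ → ℝ) (m : ℤ) (l : ℕ) :
    Hmap δ (m + l) = Hmap δ m + Gs δ m l := by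
  induction l with
  | zero => simp [Gs_zero]
  | succ k ih =>
      have h1 : (m + ((k : ℤ) + 1)) = (m + k) + 1 := by ring
      push_cast
      rw [h1, Hmap_succ, ih, Gs_succ]
      ring

lemma Gs_pos' (δ : ℤ → ℝ) (hpos : ∀ n, 0 < δ n) (m : ℤ) (l : ℕ) (hl : 1 ≤ l) :
    0 < Gs δ m l := by
  apply Finset.sum_pos (fun i _ => hpos _)
  simpa [Finset.nonempty_range_iff] using (by omega : l ≠ 0)

lemma back_sum (δ : ℤ → ℝ) (m : ℤ) (l : ℕ) :
    (∑ i ∈ Finset.range (l + 1), δ (m - 1 - (i : ℤ))) = Gs δ (m - (l + 1)) (l + 1) := by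
  rw [Gs, ← Finset.sum_range_reflect]
  apply Finset.sum_congr rfl
  intro i hi
  congr 1
  have hi' : i ≤ l := by simpa [Nat.lt_succ_iff] using hi
  omega

lemma shear_pair (M : ℝ) (hM : 1 ≤ M) (δ : ℤ → ℝ) (hpos : ∀ n, 0 < δ n)
    (hshear : ShearQS δ M) (m : ℤ) (l : ℕ) :
    Gs δ m (l + 1) ≤ M * Gs δ (m - (l + 1)) (l + 1) ∧
      Gs δ (m - (l + 1)) (l + 1) ≤ M * Gs δ m (l + 1) := by
  have hM0 : (0:ℝ) < M := by linarith
  obtain ⟨h1, h2⟩ := hshear m l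
  rw [back_sum] at h1 h2
  have hX : 0 < Gs δ m (l + 1) := by
    rw [Gs]; exact (Gs_pos' δ hpos m (l+1) (by omega))
  have hY : 0 < Gs δ (m - (l + 1)) (l + 1) := Gs_pos' δ hpos _ _ (by omega)
  have hX' : (∑ i ∈ Finset.range (l + 1), δ (m + (i : ℤ))) = Gs δ m (l + 1) := rfl
  rw [hX'] at h1 h2
  constructor
  · rw [div_le_iff₀ hY] at h2
    linarith
  · rw [div_le_div_iff₀ hM0 hY] at h1
    linarith

lemma step_le (M : ℝ) (hM : 1 ≤ M) (δ : ℤ → ℝ) (hpos : ∀ n, 0 < δ n)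
    (hshear : ShearQS δ M) (m : ℤ) :
    δ m ≤ M * δ (m - 1) ∧ δ (m - 1) ≤ M * δ m := by
  have := shear_pair M hM δ hpos hshear m 0
  simpa [Gs] using this

lemma Hmap_neg (δ : ℤ → ℝ) (n : ℤ) :
    Hmap (fun j => δ (-1 - j)) n = -Hmap δ (-n) := by
  induction n using Int.induction_on with
  | zero => simp [Hmap]
  | succ k ih =>
      rw [Hmap_succ, ih]
      have h2 := Hmap_succ δ (-(k:ℤ) - 1)
      have h3 : (-(k:ℤ) - 1) + 1 = -(k:ℤ) := by ring
      rw [h3] at h2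
      have h4 : -((k:ℤ) + 1) = -(k:ℤ) - 1 := by ring
      rw [h4, h2]
      have h5 : δ (-1 - (k:ℤ)) = δ (-(k:ℤ) - 1) := by congr 1; ring
      rw [h5]; ring
  | pred k ih =>
      have h1 := Hmap_succ (fun j => δ (-1 - j)) (-(k:ℤ) - 1)
      have h3 : (-(k:ℤ) - 1) + 1 = -(k:ℤ) := by ring
      rw [h3, ih] at h1
      have h2 := Hmap_succ δ (k:ℤ)
      have h4 : -(-(k:ℤ) - 1) = (k:ℤ) + 1 := by ring
      rw [h4, h2]
      have h5 : δ (-1 - (-(k:ℤ) - 1)) = δ (k:ℤ) := by congr 1; ring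
      rw [h5] at h1
      simp only [neg_neg] at h1
      linarith

lemma hdev_neg (δ : ℤ → ℝ) (y : ℝ) :
    hdev (fun j => δ (-1 - j)) y = -hdev δ (-y) := by
  by_cases hy : ∃ m : ℤ, (m : ℝ) = y
  · obtain ⟨m, rfl⟩ := hy
    have h1 : ⌊(m:ℝ)⌋ = m := Int.floor_intCast m
    have h2 : ⌊-(m:ℝ)⌋ = -m := by
      rw [show -(m:ℝ) = ((-m : ℤ) : ℝ) by push_cast; ring, Int.floor_intCast]
    rw [hdev, hdev, h1, h2, Hmap_neg]
    push_cast
    ring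
  · have hfl : (⌊y⌋ : ℝ) < y := by
      rcases lt_or_eq_of_le (Int.floor_le y) with h | h
      · exact h
      · exact absurd ⟨⌊y⌋, h⟩ hy
    have h1 : ⌊-y⌋ = -⌊y⌋ - 1 := by
      rw [Int.floor_eq_iff]
      constructor
      · push_cast
        linarith [Int.lt_floor_add_one y]
      · push_cast
        linarith
    rw [hdev, hdev, h1, Hmap_neg]
    have h6 := Hmap_succ δ (-⌊y⌋ - 1)
    rw [show -⌊y⌋ - 1 + 1 = -⌊y⌋ from by ring] at h6
    rw [h6]
    have h5 : δ (-1 - ⌊y⌋) = δ (-⌊y⌋ - 1) := by congr 1; ring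
    rw [h5]
    push_cast
    ring

lemma ShearQS_neg (M : ℝ) (hM : 1 ≤ M) (δ : ℤ → ℝ) (hpos : ∀ n, 0 < δ n)
    (h : ShearQS δ M) : ShearQS (fun j => δ (-1 - j)) M := by
  have hM0 : (0:ℝ) < M := by linarith
  intro m k
  have e1 : (∑ i ∈ Finset.range (k + 1), (fun j => δ (-1 - j)) (m + (i : ℤ))) =
      ∑ i ∈ Finset.range (k + 1), δ ((-m) - 1 - (i : ℤ)) := by
    apply Finset.sum_congr rfl
    intro i _
    show δ (-1 - (m + (i:ℤ))) = δ ((-m) - 1 - (i:ℤ))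
    congr 1; ring
  have e2 : (∑ i ∈ Finset.range (k + 1), (fun j => δ (-1 - j)) (m - 1 - (i : ℤ))) =
      ∑ i ∈ Finset.range (k + 1), δ ((-m) + (i : ℤ)) := by
    apply Finset.sum_congr rfl
    intro i _
    show δ (-1 - (m - 1 - (i:ℤ))) = δ ((-m) + (i:ℤ))
    congr 1; ring
  rw [e1, e2]
  obtain ⟨h1, h2⟩ := h (-m) k
  have hX : 0 < ∑ i ∈ Finset.range (k + 1), δ ((-m) + (i : ℤ)) :=
    Finset.sum_pos (fun i _ => hpos _) (by simp)
  have hY : 0 < ∑ i ∈ Finset.range (k + 1), δ ((-m) - 1 - (i : ℤ)) :=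
    Finset.sum_pos (fun i _ => hpos _) (by simp)
  constructor
  · rw [div_le_div_iff₀ hM0 hX]
    rw [div_le_iff₀ hY] at h2
    linarith
  · rw [div_le_iff₀ hX]
    rw [div_le_div_iff₀ hM0 hY] at h1
    linarith

set_option maxHeartbeats 1000000 in
lemma key (M : ℝ) (hM : 1 ≤ M) (δ : ℤ → ℝ) (hpos : ∀ n, 0 < δ n) (hshear : ShearQS δ M)
    (x t : ℝ) (ht : 0 < t) :
    0 < hdev δ x - hdev δ (x - t) ∧
      hdev δ (x + t) - hdev δ x ≤ 3 * M ^ 3 * (hdev δ x - hdev δ (x - t)) := by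
  have hM0 : (0:ℝ) < M := by linarith
  have e1 : (0:ℝ) ≤ M - 1 := by linarith
  have e2 : (1:ℝ) ≤ M ^ 3 := by
    nlinarith [mul_nonneg (mul_nonneg e1 e1) e1, mul_nonneg e1 e1]
  have e3 : M ≤ M ^ 3 := by
    nlinarith [mul_nonneg (mul_nonneg hM0.le e1) (by linarith : (0:ℝ) ≤ M + 1)]
  have e4 : M ^ 2 ≤ M ^ 3 := by
    nlinarith [mul_nonneg (mul_nonneg hM0.le hM0.le) e1]
  have hM3 : (1:ℝ) ≤ 3 * M ^ 3 := by linarith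
  have hM3' : M ≤ 3 * M ^ 3 := by linarith
  have hM3'' : M ^ 2 ≤ 3 * M ^ 3 := by linarith
  set n := ⌊x⌋ with hn
  set q := ⌊x + t⌋ with hq
  set p := ⌊x - t⌋ with hp
  have hxl : (n:ℝ) ≤ x := Int.floor_le x
  have hxu : x < n + 1 := Int.lt_floor_add_one x
  have hql : (q:ℝ) ≤ x + t := Int.floor_le _
  have hqu : x + t < q + 1 := Int.lt_floor_add_one _
  have hpl : (p:ℝ) ≤ x - t := Int.floor_le _
  have hpu : x - t < p + 1 := Int.lt_floor_add_one _
  have hpn : p ≤ n := Int.floor_le_floor (by linarith)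
  have hnq : n ≤ q := Int.floor_le_floor (by linarith)
  have hdx : hdev δ x = Hmap δ n + δ n * (x - n) := rfl
  have hdxt : hdev δ (x + t) = Hmap δ q + δ q * (x + t - q) := rfl
  have hdmt : hdev δ (x - t) = Hmap δ p + δ p * (x - t - p) := rfl
  rcases eq_or_lt_of_le hnq with hqn | hqn
  · rcases eq_or_lt_of_le hpn with hpn' | hpn'
    · -- p = n = q
      rw [hdx, hdxt, hdmt, ← hqn, ← hpn']
      constructor
      · nlinarith [mul_pos (hpos p) ht]
      · nlinarith [mul_pos (hpos p) ht,
          mul_nonneg (by linarith : (0:ℝ) ≤ 3*M^3 - 1) (mul_pos (hpos p) ht).le]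
    · -- p = n - 1, q = n
      have hpn1 : p = n - 1 := by
        have h1 : n - 1 ≤ p := by
          apply Int.le_floor.mpr
          push_cast
          have ht1 : t < 1 := by
            have : x + t < (n:ℝ) + 1 := by rw [hqn]; exact hqu
            linarith
          linarith
        omega
      have hHn : Hmap δ n = Hmap δ p + δ p := by
        rw [hpn1]
        have := Hmap_succ δ (n - 1)
        rw [show n - 1 + 1 = n from by ring] at this
        linarith
      have hxtn : x - t < (n:ℝ) := by
        have := hpu
        rw [hpn1] at this
        push_cast at this
        linarith
      have hB : hdev δ x - hdev δ (x - t)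
          = δ n * (x - n) + δ p * ((n:ℝ) - (x - t)) := by
        rw [hdx, hdmt, hHn, hpn1]
        push_cast
        ring
      have hstep : δ n ≤ M * δ p := by
        have := (step_le M hM δ hpos hshear n).1
        rwa [← hpn1] at this
      constructor
      · rw [hB]
        nlinarith [hpos n, hpos p, mul_pos (hpos p) (by linarith : (0:ℝ) < (n:ℝ) - (x - t)),
          mul_nonneg (hpos n).le (by linarith : (0:ℝ) ≤ x - n)]
      · rw [hB, hdxt, hdx, ← hqn]
        nlinarith [mul_le_mul_of_nonneg_right hstep (by linarith : (0:ℝ) ≤ (n:ℝ) - (x - t)),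
          mul_nonneg (hpos n).le (by linarith : (0:ℝ) ≤ x - n),
          mul_pos (hpos p) (by linarith : (0:ℝ) < (n:ℝ) - (x - t)),
          mul_nonneg (mul_nonneg (by linarith : (0:ℝ) ≤ 3*M^3 - 1) (hpos n).le) (by linarith : (0:ℝ) ≤ x - n),
          mul_nonneg (mul_nonneg (by linarith : (0:ℝ) ≤ 3*M^3 - M) (hpos p).le) (by linarith : (0:ℝ) ≤ (n:ℝ) - (x - t))]
  · rcases eq_or_lt_of_le hpn with hpn' | hpn'
    · -- p = n, q = n + 1
      have ht1 : t ≤ x - (n:ℝ) := by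
        have : (n:ℝ) ≤ x - t := by rw [← hpn']; exact hpl
        linarith
      have hqn1 : q = n + 1 := by
        have h1 : q < n + 2 := by
          rw [hq]
          apply Int.floor_lt.mpr
          push_cast
          linarith
        omega
      have hHq : Hmap δ q = Hmap δ n + δ n := by
        rw [hqn1]; exact Hmap_succ δ n
      have hstep : δ q ≤ M * δ n := by
        have := (step_le M hM δ hpos hshear q).1
        rwa [show q - 1 = n from by omega] at this
      have hB : hdev δ x - hdev δ (x - t) = δ n * t := by
        rw [hdx, hdmt, ← hpn']
        ring
      have hA : hdev δ (x + t) - hdev δ x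
          = δ n * (1 - (x - n)) + δ q * (x + t - (n:ℝ) - 1) := by
        rw [hdxt, hdx, hHq, hqn1]
        push_cast
        ring
      have hc0 : (0:ℝ) ≤ x + t - (n:ℝ) - 1 := by
        have : ((n:ℝ) + 1) ≤ x + t := by
          have := hql; rw [hqn1] at this; push_cast at this; linarith
        linarith
      constructor
      · rw [hB]; exact mul_pos (hpos n) ht
      · rw [hA, hB]
        nlinarith [mul_le_mul_of_nonneg_right hstep hc0,
          mul_nonneg (hpos n).le (by linarith : (0:ℝ) ≤ 1 - (x - n)),
          mul_nonneg (mul_nonneg (by linarith : (0:ℝ) ≤ M - 1) (hpos n).le)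
            (by linarith : (0:ℝ) ≤ 1 - (x - n)),
          mul_nonneg (mul_nonneg (by nlinarith : (0:ℝ) ≤ 3*M^3 - M) (hpos n).le) ht.le]
    · -- main case : p < n < q
      obtain ⟨r, hr1, hr2⟩ : ∃ r : ℕ, q = n + (r:ℤ) ∧ 1 ≤ r := ⟨(q - n).toNat, by omega, by omega⟩
      obtain ⟨s', hs1⟩ : ∃ s' : ℕ, p = n - ((s':ℤ) + 1) := ⟨(n - p - 1).toNat, by omega⟩
      have hqr : (q:ℝ) = (n:ℝ) + (r:ℝ) := by exact_mod_cast hr1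
      have hps : (p:ℝ) = (n:ℝ) - ((s':ℝ) + 1) := by exact_mod_cast hs1
      set u := x - (n:ℝ) with hu
      set v := x + t - (q:ℝ) with hv
      set w := x - t - (p:ℝ) with hw
      have hu0 : 0 ≤ u := by rw [hu]; linarith
      have hu1 : u < 1 := by rw [hu]; linarith
      have hv0 : 0 ≤ v := by rw [hv]; linarith
      have hv1 : v < 1 := by rw [hv]; linarith
      have hw0 : 0 ≤ w := by rw [hw]; linarith
      have hw1 : w < 1 := by rw [hw]; linarith
      have htr : t = (r:ℝ) + v - u := by rw [hv, hu]; rw [hqr] at *; linarith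
      have hts : t = ((s':ℝ) + 1) + u - w := by rw [hw, hu]; rw [hps] at *; linarith
      have hHq : Hmap δ q = Hmap δ n + Gs δ n r := by rw [hr1]; exact Hmap_add δ n r
      have hHn : Hmap δ n = Hmap δ p + Gs δ p (s' + 1) := by
        have h0 := Hmap_add δ p (s' + 1)
        rw [show p + ((s' + 1 : ℕ):ℤ) = n from by push_cast; omega] at h0
        exact h0
      have hA : hdev δ (x + t) - hdev δ x = Gs δ n r + δ q * v - δ n * u := by
        rw [hdxt, hdx, hHq, hv, hu]; ring
      have hB : hdev δ x - hdev δ (x - t)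
          = δ p * (1 - w) + Gs δ (p + 1) s' + δ n * u := by
        rw [hdx, hdmt, hHn, Gs_cons, hw, hu]; ring
      have hQ0 : 0 ≤ Gs δ (p + 1) s' := Gs_nonneg δ hpos _ _
      have hBpos : 0 < hdev δ x - hdev δ (x - t) := by
        rw [hB]
        nlinarith [mul_pos (hpos p) (by linarith : (0:ℝ) < 1 - w),
          mul_nonneg (hpos n).le hu0]
      refine ⟨hBpos, ?_⟩
      have hrs : (r:ℝ) - ((s':ℝ) + 1) = 2*u - v - w := by linarith
      have htri : r = s' ∨ r = s' + 1 ∨ r = s' + 2 := by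
        have hd1 : (r:ℝ) < (s':ℝ) + 3 := by linarith
        have hd2 : ((s':ℝ)) < (r:ℝ) + 1 := by linarith
        have hd1' : r < s' + 3 := by exact_mod_cast hd1
        have hd2' : s' < r + 1 := by exact_mod_cast hd2
        omega
      -- A ≤ Gs n (r+1), used in first two branches
      have hA1 : hdev δ (x + t) - hdev δ x ≤ Gs δ n (r + 1) := by
        rw [hA, Gs_succ, ← hr1]
        nlinarith [mul_nonneg (hpos n).le hu0,
          mul_le_mul_of_nonneg_left hv1.le (hpos q).le]
      have hstp : δ p ≤ M * δ (p + 1) := by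
        have := (step_le M hM δ hpos hshear (p + 1)).2
        rwa [show p + 1 - 1 = p from by ring] at this
      have h3Q : (0:ℝ) ≤ 3 * M ^ 3 := by linarith
      have hBterm1 : (0:ℝ) ≤ δ p * (1 - w) := by
        apply mul_nonneg (hpos p).le; linarith
      have hBterm2 : (0:ℝ) ≤ δ n * u := mul_nonneg (hpos n).le hu0
      rcases htri with hcase | hcase | hcase
      · -- r = s' : backward interval one longer
        have hs'1 : 1 ≤ s' := by omega
        have hsh := (shear_pair M hM δ hpos hshear n r).1
        rw [show n - ((r:ℤ) + 1) = p from by omega] at hsh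
        have hdec : Gs δ p (r + 1) = δ p + Gs δ (p + 1) s' := by
          rw [Gs_cons, hcase]
        have hQge : δ (p + 1) ≤ Gs δ (p + 1) s' := by
          obtain ⟨s1, hs1'⟩ : ∃ s1, s' = s1 + 1 := ⟨s' - 1, by omega⟩
          rw [hs1', Gs_cons]
          linarith [Gs_nonneg δ hpos (p + 1 + 1) s1]
        have c1 : hdev δ (x + t) - hdev δ x ≤ M * (δ p + Gs δ (p + 1) s') := by
          rw [← hdec]; linarith
        have c2 : δ p + Gs δ (p + 1) s' ≤ (M + 1) * Gs δ (p + 1) s' := by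
          have d2 := mul_le_mul_of_nonneg_left hQge hM0.le
          linarith only [d2, hstp]
        have c3 : hdev δ (x + t) - hdev δ x ≤ M * ((M + 1) * Gs δ (p + 1) s') :=
          le_trans c1 (mul_le_mul_of_nonneg_left c2 hM0.le)
        have c4 : M * ((M + 1) * Gs δ (p + 1) s') ≤ 3 * M ^ 3 * Gs δ (p + 1) s' := by
          have h9 : (0:ℝ) ≤ 3 * M ^ 3 - M ^ 2 - M := by linarith
          linarith only [mul_nonneg h9 hQ0]
        rw [hB]
        linarith only [c3, c4, mul_nonneg h3Q hBterm1, mul_nonneg h3Q hBterm2]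
      · -- r = s' + 1 : equal length
        rcases Nat.eq_zero_or_pos s' with hs0 | hs'1
        · -- r = 1, s' = 0
          have hr1' : r = 1 := by omega
          have hGs1 : Gs δ n r = δ n := by rw [hr1', Gs_one]
          have hQz : Gs δ (p + 1) s' = 0 := by rw [hs0, Gs_zero]
          have f1 : δ q ≤ M * δ n := by
            have := (step_le M hM δ hpos hshear q).1
            rwa [show q - 1 = n from by omega] at this
          have f3 : δ n ≤ M * δ p := by
            have := (step_le M hM δ hpos hshear n).1
            rwa [show n - 1 = p from by omega] at this
          have hrel : v + w = 2 * u := by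
            rw [hcase, hs0] at hrs; push_cast at hrs; linarith
          have hveq : δ n * v = δ n * (2 * u - w) := by
            congr 1; linarith
          have h1 := mul_le_mul_of_nonneg_right f1 hv0
          have h2 := mul_le_mul_of_nonneg_right f3 (by linarith : (0:ℝ) ≤ 1 - w)
          have h3 := mul_le_mul_of_nonneg_left h2 hM0.le
          have hveqM : M * (δ n * v) = M * (δ n * (2 * u - w)) := by rw [hveq]
          rw [hB, hA, hGs1, hQz]
          linarith only [h1, h3, hveqM,
            mul_nonneg (mul_nonneg e1 (hpos n).le) (by linarith : (0:ℝ) ≤ 1 - u),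
            mul_nonneg (by linarith : (0:ℝ) ≤ 3 * M ^ 3 - 2 * M + 1) hBterm2,
            mul_nonneg (by linarith : (0:ℝ) ≤ 3 * M ^ 3 - M ^ 2) hBterm1,
            mul_nonneg e1 (hpos n).le]
        · -- s' ≥ 1
          have hsh := (shear_pair M hM δ hpos hshear n r).1
          rw [show n - ((r:ℤ) + 1) = p - 1 from by omega] at hsh
          have hdec : Gs δ (p - 1) (r + 1) = δ (p - 1) + (δ p + Gs δ (p + 1) s') := by
            rw [show r + 1 = (s' + 1) + 1 from by omega, Gs_cons,
              show p - 1 + 1 = p from by ring, Gs_cons]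
          have hQge : δ (p + 1) ≤ Gs δ (p + 1) s' := by
            obtain ⟨s1, hs1'⟩ : ∃ s1, s' = s1 + 1 := ⟨s' - 1, by omega⟩
            rw [hs1', Gs_cons]
            linarith [Gs_nonneg δ hpos (p + 1 + 1) s1]
          have hstp2 : δ (p - 1) ≤ M * δ p := (step_le M hM δ hpos hshear p).2
          have c1 : hdev δ (x + t) - hdev δ x
              ≤ M * (δ (p - 1) + (δ p + Gs δ (p + 1) s')) := by
            rw [← hdec]; linarith
          have c2 : δ (p - 1) + (δ p + Gs δ (p + 1) s')
              ≤ (M * M + M + 1) * Gs δ (p + 1) s' := by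
            have d1 := mul_le_mul_of_nonneg_left hstp hM0.le
            have d2 := mul_le_mul_of_nonneg_left hQge hM0.le
            have d3 := mul_le_mul_of_nonneg_left d2 hM0.le
            linarith only [hstp2, hstp, d1, d2, d3]
          have c3 : hdev δ (x + t) - hdev δ x
              ≤ M * ((M * M + M + 1) * Gs δ (p + 1) s') :=
            le_trans c1 (mul_le_mul_of_nonneg_left c2 hM0.le)
          have c4 : M * ((M * M + M + 1) * Gs δ (p + 1) s')
              ≤ 3 * M ^ 3 * Gs δ (p + 1) s' := by
            have h9 : (0:ℝ) ≤ 3 * M ^ 3 - (M ^ 3 + M ^ 2 + M) := by linarith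
            linarith only [mul_nonneg h9 hQ0]
          rw [hB]
          linarith only [c3, c4, mul_nonneg h3Q hBterm1, mul_nonneg h3Q hBterm2]
      · -- r = s' + 2 : forward interval one longer
        have hw2 : w = 2 * u - v - 1 := by
          rw [hcase] at hrs; push_cast at hrs; linarith
        rcases Nat.eq_zero_or_pos s' with hs0 | hs'1
        · -- r = 2, s' = 0
          have hr2' : r = 2 := by omega
          have hGs2 : Gs δ n r = δ n + δ (n + 1) := by
            rw [hr2', Gs_cons, Gs_one]
          have hQz : Gs δ (p + 1) s' = 0 := by rw [hs0, Gs_zero]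
          have f1 : δ (n + 1) ≤ M * δ n := by
            have := (step_le M hM δ hpos hshear (n + 1)).1
            rwa [show n + 1 - 1 = n from by ring] at this
          have f2 : δ q ≤ M * δ (n + 1) := by
            have := (step_le M hM δ hpos hshear q).1
            rwa [show q - 1 = n + 1 from by omega] at this
          have f3 : δ n ≤ M * δ p := by
            have := (step_le M hM δ hpos hshear n).1
            rwa [show n - 1 = p from by omega] at this
          have huv : (0:ℝ) ≤ u - v := by linarith
          have g2 : (1 - u) + M + M ^ 2 * v ≤ M * (2 - 2 * u + v) + M ^ 2 * u := by
            linarith only [mul_nonneg e1 (by linarith : (0:ℝ) ≤ 1 - v),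
              mul_nonneg (mul_nonneg e1 e1) huv]
          have g3 := mul_le_mul_of_nonneg_left g2 (hpos n).le
          have k2 : δ q * v ≤ M * (M * δ n) * v := by
            have d1 := mul_le_mul_of_nonneg_right f2 hv0
            have d2 := mul_le_mul_of_nonneg_right
              (mul_le_mul_of_nonneg_left f1 hM0.le) hv0
            linarith
          have k3 : M * (δ n * (2 - 2 * u + v)) ≤ M * (M * δ p * (2 - 2 * u + v)) := by
            apply mul_le_mul_of_nonneg_left _ hM0.le
            apply mul_le_mul_of_nonneg_right f3
            linarith
          have hpw : δ p * (1 - w) = δ p * (2 - 2 * u + v) := by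
            congr 1; linarith
          rw [hB, hA, hGs2, hQz, hpw]
          nlinarith only [g3, k2, k3, f1,
            mul_nonneg (by linarith : (0:ℝ) ≤ 3 * M ^ 3 - M ^ 2)
              (mul_nonneg (hpos p).le (by linarith : (0:ℝ) ≤ 2 - 2 * u + v)),
            mul_nonneg (by linarith : (0:ℝ) ≤ 3 * M ^ 3 - M ^ 2) hBterm2]
        · -- s' ≥ 1
          have hu12 : (1:ℝ)/2 ≤ u := by linarith
          have hAdec : hdev δ (x + t) - hdev δ x
              = δ n * (1 - u) + (Gs δ (n + 1) (s' + 1) + δ q * v) := by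
            rw [hA, show r = (s' + 1) + 1 from by omega, Gs_cons]; ring
          have hP : Gs δ (n + 1) (s' + 1) + δ q * v ≤ Gs δ (n + 1) ((s' + 1) + 1) := by
            have e : Gs δ (n + 1) ((s' + 1) + 1) = Gs δ (n + 1) (s' + 1) + δ q := by
              rw [Gs_succ, show n + 1 + ((s' + 1 : ℕ):ℤ) = q from by push_cast; omega]
            rw [e]
            linarith only [mul_le_mul_of_nonneg_left hv1.le (hpos q).le]
          have hsh := (shear_pair M hM δ hpos hshear (n + 1) (s' + 1)).1
          rw [show n + 1 - (((s' + 1 : ℕ):ℤ) + 1) = p from by push_cast; omega] at hsh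
          have hdec : Gs δ p ((s' + 1) + 1) = δ p + (Gs δ (p + 1) s' + δ n) := by
            rw [Gs_cons, Gs_succ, show p + 1 + (s' : ℤ) = n from by omega]
          have hQge : δ (p + 1) ≤ Gs δ (p + 1) s' := by
            obtain ⟨s1, hs1'⟩ : ∃ s1, s' = s1 + 1 := ⟨s' - 1, by omega⟩
            rw [hs1', Gs_cons]
            linarith [Gs_nonneg δ hpos (p + 1 + 1) s1]
          rw [hdec] at hsh
          have c1 : hdev δ (x + t) - hdev δ x
              ≤ δ n * (1 - u) + M * (δ p + (Gs δ (p + 1) s' + δ n)) := by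
            rw [hAdec]; linarith
          have c2 : M * δ p ≤ M * (M * Gs δ (p + 1) s') := by
            apply mul_le_mul_of_nonneg_left _ hM0.le
            calc δ p ≤ M * δ (p + 1) := hstp
              _ ≤ M * Gs δ (p + 1) s' := mul_le_mul_of_nonneg_left hQge hM0.le
          have c3 : δ n * (1 - u) + M * δ n ≤ (1 + 2 * M) * (δ n * u) := by
            linarith only [mul_nonneg (mul_nonneg (by linarith : (0:ℝ) ≤ 1 + M) (hpos n).le)
              (by linarith : (0:ℝ) ≤ 2 * u - 1)]
          rw [hB]
          linarith only [c1, c2, c3,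
            mul_nonneg (by linarith : (0:ℝ) ≤ 3 * M ^ 3 - 1 - 2 * M) hBterm2,
            mul_nonneg (by linarith : (0:ℝ) ≤ 3 * M ^ 3 - M ^ 2 - M) hQ0,
            mul_nonneg h3Q hBterm1]

set_option maxHeartbeats 1000000 in
theorem single_fan_quasisymmetric (M : ℝ) (hM : 1 ≤ M) (δ : ℤ → ℝ)
    (hpos : ∀ n, 0 < δ n) (hshear : ShearQS δ M) :
    QSCond (hdev δ) (max (3 * M ^ 3) (M ^ 10)) := by
  intro x t ht
  have hM0 : (0:ℝ) < M := by linarith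
  have h3pos : (0:ℝ) < 3 * M ^ 3 := by positivity
  have hK3 : 3 * M ^ 3 ≤ max (3 * M ^ 3) (M ^ 10) := le_max_left _ _
  have hKpos : (0:ℝ) < max (3 * M ^ 3) (M ^ 10) := lt_of_lt_of_le h3pos hK3
  obtain ⟨hB, hA⟩ := key M hM δ hpos hshear x t ht
  have hpos' : ∀ n, 0 < (fun j => δ (-1 - j)) n := fun n => hpos _
  obtain ⟨hB', hA'⟩ := key M hM (fun j => δ (-1 - j)) hpos'
    (ShearQS_neg M hM δ hpos hshear) (-x) t ht
  rw [hdev_neg, hdev_neg] at hB'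
  rw [hdev_neg, hdev_neg, hdev_neg] at hA'
  rw [show -(-x) = x from by ring, show -(-x - t) = x + t from by ring] at hB'
  rw [show -(-x) = x from by ring, show -(-x - t) = x + t from by ring,
    show -(-x + t) = x - t from by ring] at hA'
  have hApos : 0 < hdev δ (x + t) - hdev δ x := by linarith
  have hBA : hdev δ x - hdev δ (x - t)
      ≤ max (3 * M ^ 3) (M ^ 10) * (hdev δ (x + t) - hdev δ x) := by
    have h1 : hdev δ x - hdev δ (x - t)
        ≤ 3 * M ^ 3 * (hdev δ (x + t) - hdev δ x) := by linarith
    have h2 := mul_le_mul_of_nonneg_right hK3 hApos.le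
    linarith
  have hAB : hdev δ (x + t) - hdev δ x
      ≤ max (3 * M ^ 3) (M ^ 10) * (hdev δ x - hdev δ (x - t)) := by
    have h2 := mul_le_mul_of_nonneg_right hK3 hB.le
    linarith
  constructor
  · rw [le_div_iff₀ hB, div_mul_eq_mul_div, one_mul, div_le_iff₀ hKpos]
    calc hdev δ x - hdev δ (x - t)
        ≤ max (3 * M ^ 3) (M ^ 10) * (hdev δ (x + t) - hdev δ x) := hBA
      _ = (hdev δ (x + t) - hdev δ x) * max (3 * M ^ 3) (M ^ 10) := by ring
  · rw [div_le_iff₀ hB]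
    exact hAB
end

section
/- Let M ≥ 1 and let δ : ℤ → ℝ be a sequence with δ n > 0 and 1/M ≤ δ_{n+1}/δ_n ≤ M for all n ∈ ℤ. Then for every x ∈ ℝ and every t with 0 < t ≤ 5, M^{−10} ≤ (h_δ(x+t) − h_δ(x))/(h_δ(x) − h_δ(x−t)) ≤ M^{10}. -/
lemma hdev_intCast (δ : ℤ → ℝ) (n : ℤ) : hdev δ (n : ℝ) = Hmap δ n := by
  simp [hdev]

lemma hdev_sub_le (δ : ℤ → ℝ) (c : ℝ) :
    ∀ k : ℕ, ∀ y y' : ℝ, y ≤ y' → ⌊y'⌋ = ⌊y⌋ + k →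
      (∀ n : ℤ, ⌊y⌋ ≤ n → n ≤ ⌊y'⌋ → δ n ≤ c) →
      hdev δ y' - hdev δ y ≤ c * (y' - y) := by
  intro k
  induction k with
  | zero =>
    intro y y' hle hfl hc
    simp only [Nat.cast_zero, add_zero] at hfl
    have hd : hdev δ y' - hdev δ y = δ ⌊y⌋ * (y' - y) := by
      unfold hdev; rw [hfl]; ring
    rw [hd]
    have h1 : δ ⌊y⌋ ≤ c := hc ⌊y⌋ le_rfl (by omega)
    nlinarith [sub_nonneg.mpr hle]
  | succ k ih =>
    intro y y' hle hfl hc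
    set z : ℝ := ((⌊y⌋ + 1 : ℤ) : ℝ) with hz
    have hfz : ⌊z⌋ = ⌊y⌋ + 1 := Int.floor_intCast _
    have hyz : y ≤ z := by
      have := Int.lt_floor_add_one y
      push_cast [hz]; linarith
    have hzy' : z ≤ y' := by
      have h1 : (⌊y'⌋ : ℝ) ≤ y' := Int.floor_le y'
      have h2 : (⌊y⌋ : ℤ) + 1 ≤ ⌊y'⌋ := by omega
      have : ((⌊y⌋ + 1 : ℤ) : ℝ) ≤ (⌊y'⌋ : ℝ) := by exact_mod_cast h2
      linarith
    have h1 : hdev δ z - hdev δ y ≤ c * (z - y) := by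
      have hzv : hdev δ z = Hmap δ ⌊y⌋ + δ ⌊y⌋ := by
        rw [hz, hdev_intCast, Hmap_succ]
      have hd : hdev δ z - hdev δ y = δ ⌊y⌋ * (z - y) := by
        rw [hzv]; unfold hdev; push_cast [hz]; ring
      rw [hd]
      have hcy : δ ⌊y⌋ ≤ c := hc ⌊y⌋ le_rfl (by omega)
      nlinarith [sub_nonneg.mpr hyz]
    have h2 : hdev δ y' - hdev δ z ≤ c * (y' - z) := by
      apply ih z y' hzy' (by rw [hfz]; push_cast at hfl ⊢; omega)
      intro n hn1 hn2
      exact hc n (by omega) hn2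
    linarith

lemma hdev_sub_ge (δ : ℤ → ℝ) (c : ℝ) :
    ∀ k : ℕ, ∀ y y' : ℝ, y ≤ y' → ⌊y'⌋ = ⌊y⌋ + k →
      (∀ n : ℤ, ⌊y⌋ ≤ n → n ≤ ⌊y'⌋ → c ≤ δ n) →
      c * (y' - y) ≤ hdev δ y' - hdev δ y := by
  intro k
  induction k with
  | zero =>
    intro y y' hle hfl hc
    simp only [Nat.cast_zero, add_zero] at hfl
    have hd : hdev δ y' - hdev δ y = δ ⌊y⌋ * (y' - y) := by
      unfold hdev; rw [hfl]; ring
    rw [hd]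
    have h1 : c ≤ δ ⌊y⌋ := hc ⌊y⌋ le_rfl (by omega)
    nlinarith [sub_nonneg.mpr hle]
  | succ k ih =>
    intro y y' hle hfl hc
    set z : ℝ := ((⌊y⌋ + 1 : ℤ) : ℝ) with hz
    have hfz : ⌊z⌋ = ⌊y⌋ + 1 := Int.floor_intCast _
    have hyz : y ≤ z := by
      have := Int.lt_floor_add_one y
      push_cast [hz]; linarith
    have hzy' : z ≤ y' := by
      have h1 : (⌊y'⌋ : ℝ) ≤ y' := Int.floor_le y'
      have h2 : (⌊y⌋ : ℤ) + 1 ≤ ⌊y'⌋ := by omega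
      have : ((⌊y⌋ + 1 : ℤ) : ℝ) ≤ (⌊y'⌋ : ℝ) := by exact_mod_cast h2
      linarith
    have h1 : c * (z - y) ≤ hdev δ z - hdev δ y := by
      have hzv : hdev δ z = Hmap δ ⌊y⌋ + δ ⌊y⌋ := by
        rw [hz, hdev_intCast, Hmap_succ]
      have hd : hdev δ z - hdev δ y = δ ⌊y⌋ * (z - y) := by
        rw [hzv]; unfold hdev; push_cast [hz]; ring
      rw [hd]
      have hcy : c ≤ δ ⌊y⌋ := hc ⌊y⌋ le_rfl (by omega)
      nlinarith [sub_nonneg.mpr hyz]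
    have h2 : c * (y' - z) ≤ hdev δ y' - hdev δ z := by
      apply ih z y' hzy' (by rw [hfz]; push_cast at hfl ⊢; omega)
      intro n hn1 hn2
      exact hc n (by omega) hn2
    linarith

theorem small_scale_quasisymmetry (M : ℝ) (hM : 1 ≤ M) (δ : ℤ → ℝ)
    (hpos : ∀ n, 0 < δ n)
    (hratio : ∀ n : ℤ, 1 / M ≤ δ (n + 1) / δ n ∧ δ (n + 1) / δ n ≤ M) :
    ∀ (x t : ℝ), 0 < t → t ≤ 5 →
      1 / M ^ 10 ≤ (hdev δ (x + t) - hdev δ x) / (hdev δ x - hdev δ (x - t)) ∧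
        (hdev δ (x + t) - hdev δ x) / (hdev δ x - hdev δ (x - t)) ≤ M ^ 10 := by
  have hM0 : (0:ℝ) < M := lt_of_lt_of_le one_pos hM
  -- one-step bounds
  have step1 : ∀ n : ℤ, δ (n + 1) ≤ M * δ n := by
    intro n
    have h := (hratio n).2
    have := (div_le_iff₀ (hpos n)).mp h
    linarith
  have step2 : ∀ n : ℤ, δ n ≤ M * δ (n + 1) := by
    intro n
    have h := (hratio n).1
    rw [div_le_div_iff₀ hM0 (hpos n)] at h
    linarith
  -- iterated bounds
  have pow_up : ∀ m : ℕ, ∀ b : ℤ, δ (b + m) ≤ M ^ m * δ b := by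
    intro m
    induction m with
    | zero => intro b; simp
    | succ m ih =>
      intro b
      have h1 : δ (b + m + 1) ≤ M * δ (b + m) := step1 _
      have h2 := ih b
      have hMm : (0:ℝ) ≤ M ^ m := by positivity
      calc δ (b + (m + 1 : ℕ)) = δ (b + m + 1) := by congr 1; push_cast; ring
        _ ≤ M * δ (b + m) := h1
        _ ≤ M * (M ^ m * δ b) := by nlinarith
        _ = M ^ (m + 1) * δ b := by ring
  have pow_down : ∀ m : ℕ, ∀ b : ℤ, δ (b - m) ≤ M ^ m * δ b := by
    intro m
    induction m with
    | zero => intro b; simp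
    | succ m ih =>
      intro b
      have h1 : δ (b - m - 1) ≤ M * δ (b - m) := by
        have := step2 (b - m - 1)
        have he : b - m - 1 + 1 = b - m := by ring
        rw [he] at this
        exact this
      have h2 := ih b
      have hMm : (0:ℝ) ≤ M ^ m := by positivity
      calc δ (b - (m + 1 : ℕ)) = δ (b - m - 1) := by congr 1; push_cast; ring
        _ ≤ M * δ (b - m) := h1
        _ ≤ M * (M ^ m * δ b) := by nlinarith
        _ = M ^ (m + 1) * δ b := by ring
  intro x t ht ht5
  set F := ⌊x⌋ with hF
  set d := δ F with hd
  have hdpos : 0 < d := hpos F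
  have hP : (0:ℝ) < M ^ 5 := by positivity
  -- floor bounds
  have hflu : ⌊x + t⌋ ≤ F + 5 := by
    have h1 : x + t ≤ x + (5:ℤ) := by push_cast; linarith
    have := Int.floor_le_floor h1
    rw [Int.floor_add_intCast] at this
    omega
  have hfll : F - 5 ≤ ⌊x - t⌋ := by
    have h1 : x - (5:ℤ) ≤ x - t := by push_cast; linarith
    have := Int.floor_le_floor h1
    rw [Int.floor_sub_intCast] at this
    omega
  have hfge : F ≤ ⌊x + t⌋ := Int.floor_le_floor (by linarith)
  have hfle : ⌊x - t⌋ ≤ F := Int.floor_le_floor (by linarith)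
  -- bounds on δ n in the relevant ranges
  have fwd_up : ∀ n : ℤ, F ≤ n → n ≤ ⌊x + t⌋ → δ n ≤ M ^ 5 * d := by
    intro n h1 h2
    have hm : n = F + ((n - F).toNat : ℤ) := by omega
    have := pow_up (n - F).toNat F
    rw [← hm] at this
    have hle : M ^ (n - F).toNat ≤ M ^ 5 := pow_le_pow_right₀ hM (by omega)
    nlinarith
  have fwd_lo : ∀ n : ℤ, F ≤ n → n ≤ ⌊x + t⌋ → d / M ^ 5 ≤ δ n := by
    intro n h1 h2
    have hm : F = n - ((n - F).toNat : ℤ) := by omega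
    have := pow_down (n - F).toNat n
    rw [← hm] at this
    have hle : M ^ (n - F).toNat ≤ M ^ 5 := pow_le_pow_right₀ hM (by omega)
    rw [div_le_iff₀ hP]
    nlinarith [hpos n]
  have bwd_up : ∀ n : ℤ, ⌊x - t⌋ ≤ n → n ≤ F → δ n ≤ M ^ 5 * d := by
    intro n h1 h2
    have hm : n = F - ((F - n).toNat : ℤ) := by omega
    have := pow_down (F - n).toNat F
    rw [← hm] at this
    have hle : M ^ (F - n).toNat ≤ M ^ 5 := pow_le_pow_right₀ hM (by omega)
    nlinarith
  have bwd_lo : ∀ n : ℤ, ⌊x - t⌋ ≤ n → n ≤ F → d / M ^ 5 ≤ δ n := by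
    intro n h1 h2
    have hm : F = n + ((F - n).toNat : ℤ) := by omega
    have := pow_up (F - n).toNat n
    rw [← hm] at this
    have hle : M ^ (F - n).toNat ≤ M ^ 5 := pow_le_pow_right₀ hM (by omega)
    rw [div_le_iff₀ hP]
    nlinarith [hpos n]
  -- apply the main lemmas
  set A := hdev δ (x + t) - hdev δ x with hA
  set B := hdev δ x - hdev δ (x - t) with hB
  have hkf : ⌊x + t⌋ = ⌊x⌋ + ((⌊x + t⌋ - F).toNat : ℕ) := by omega
  have hkb : ⌊x⌋ = ⌊x - t⌋ + ((F - ⌊x - t⌋).toNat : ℕ) := by omega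
  have hAup : A ≤ M ^ 5 * d * t := by
    have := hdev_sub_le δ (M ^ 5 * d) (⌊x + t⌋ - F).toNat x (x + t)
      (by linarith) hkf fwd_up
    calc A ≤ M ^ 5 * d * (x + t - x) := this
      _ = M ^ 5 * d * t := by ring
  have hAlo : d / M ^ 5 * t ≤ A := by
    have := hdev_sub_ge δ (d / M ^ 5) (⌊x + t⌋ - F).toNat x (x + t)
      (by linarith) hkf fwd_lo
    calc d / M ^ 5 * t = d / M ^ 5 * (x + t - x) := by ring
      _ ≤ A := this
  have hBup : B ≤ M ^ 5 * d * t := by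
    have := hdev_sub_le δ (M ^ 5 * d) (F - ⌊x - t⌋).toNat (x - t) x
      (by linarith) hkb bwd_up
    calc B ≤ M ^ 5 * d * (x - (x - t)) := this
      _ = M ^ 5 * d * t := by ring
  have hBlo : d / M ^ 5 * t ≤ B := by
    have := hdev_sub_ge δ (d / M ^ 5) (F - ⌊x - t⌋).toNat (x - t) x
      (by linarith) hkb bwd_lo
    calc d / M ^ 5 * t = d / M ^ 5 * (x - (x - t)) := by ring
      _ ≤ B := this
  have hBpos : 0 < B := lt_of_lt_of_le (by positivity) hBlo
  have hApos : 0 < A := lt_of_lt_of_le (by positivity) hAlo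
  have hkey : M ^ 10 * (d / M ^ 5 * t) = M ^ 5 * d * t := by
    field_simp
  constructor
  · rw [div_le_div_iff₀ (by positivity) hBpos]
    have h1 : M ^ 10 * (d / M ^ 5 * t) ≤ M ^ 10 * A := by
      apply mul_le_mul_of_nonneg_left hAlo (by positivity)
    rw [hkey] at h1
    calc (1:ℝ) * B = B := by ring
      _ ≤ M ^ 5 * d * t := hBup
      _ ≤ M ^ 10 * A := h1
      _ = A * M ^ 10 := by ring
  · rw [div_le_iff₀ hBpos]
    have h1 : M ^ 10 * (d / M ^ 5 * t) ≤ M ^ 10 * B := by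
      apply mul_le_mul_of_nonneg_left hBlo (by positivity)
    rw [hkey] at h1
    linarith
end

section
/- Let M ≥ 1 and let δ : ℤ → ℝ be a sequence with δ n > 0 for all n that satisfies the quasisymmetric shear condition with constant M. Then both tails of δ diverge: the series Σ_{n=0}^{∞} δ_n and Σ_{n=1}^{∞} δ_{−n} are not summable. -/
open Filter Finset Topology
theorem shear_condition_tails_diverge (M : ℝ) (hM : 1 ≤ M) (δ : ℤ → ℝ)
    (hpos : ∀ n, 0 < δ n) (hshear : ShearQS δ M) :
    ¬ Summable (fun n : ℕ => δ (n : ℤ)) ∧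
      ¬ Summable (fun n : ℕ => δ (-(n : ℤ) - 1)) := by
  have hM0 : (0:ℝ) < M := lt_of_lt_of_le one_pos hM
  constructor
  · intro hs
    set f : ℕ → ℝ := fun n => δ (n : ℤ) with hf
    have hε : 0 < δ (-1) / M := div_pos (hpos _) hM0
    have htail : Tendsto (fun m => ∑' i, f (i + m)) atTop (𝓝 0) :=
      tendsto_sum_nat_add f
    obtain ⟨m, hm⟩ : ∃ m, ∑' i, f (i + m) < δ (-1) / M :=
      (htail.eventually (gt_mem_nhds hε)).exists
    obtain ⟨h1, -⟩ := hshear (m : ℤ) m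
    set A := ∑ i ∈ Finset.range (m + 1), δ ((m:ℤ) + (i : ℤ)) with hA
    set B := ∑ i ∈ Finset.range (m + 1), δ ((m:ℤ) - 1 - (i : ℤ)) with hB
    have hBpos : 0 < B := Finset.sum_pos (fun i _ => hpos _) ⟨0, by simp⟩
    have hBA : B ≤ A * M := by
      rw [div_le_div_iff₀ hM0 hBpos] at h1; linarith [h1]
    have hδB : δ (-1) ≤ B := by
      have := Finset.single_le_sum (f := fun i : ℕ => δ ((m:ℤ) - 1 - (i : ℤ)))
        (fun i _ => (hpos _).le) (Finset.self_mem_range_succ m)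
      simpa using this
    have hAtail : A ≤ ∑' i, f (i + m) := by
      have hsum : Summable (fun i => f (i + m)) := (summable_nat_add_iff m).2 hs
      calc A = ∑ i ∈ Finset.range (m + 1), f (i + m) := by
              refine Finset.sum_congr rfl fun i _ => ?_
              simp [hf]; congr 1; push_cast; ring
        _ ≤ ∑' i, f (i + m) := Summable.sum_le_tsum _ (fun i _ => (hpos _).le) hsum
    have h3 : A * M < δ (-1) := by
      have h4 : A * M < (δ (-1) / M) * M :=
        mul_lt_mul_of_pos_right (lt_of_le_of_lt hAtail hm) hM0
      rwa [div_mul_cancel₀ _ (ne_of_gt hM0)] at h4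
    linarith
  · intro hs
    set g : ℕ → ℝ := fun n => δ (-(n:ℤ) - 1) with hg
    have hε : 0 < δ 0 / M := div_pos (hpos _) hM0
    have htail : Tendsto (fun m => ∑' i, g (i + m)) atTop (𝓝 0) :=
      tendsto_sum_nat_add g
    obtain ⟨m, hm⟩ : ∃ m, ∑' i, g (i + m) < δ 0 / M :=
      (htail.eventually (gt_mem_nhds hε)).exists
    obtain ⟨-, h2⟩ := hshear (-(m : ℤ)) m
    set A := ∑ i ∈ Finset.range (m + 1), δ (-(m:ℤ) + (i : ℤ)) with hA
    set B := ∑ i ∈ Finset.range (m + 1), δ (-(m:ℤ) - 1 - (i : ℤ)) with hB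
    have hBpos : 0 < B := Finset.sum_pos (fun i _ => hpos _) ⟨0, by simp⟩
    have hAB : A ≤ M * B := by
      rw [div_le_iff₀ hBpos] at h2; linarith [h2]
    have hδA : δ 0 ≤ A := by
      have := Finset.single_le_sum (f := fun i : ℕ => δ (-(m:ℤ) + (i : ℤ)))
        (fun i _ => (hpos _).le) (Finset.self_mem_range_succ m)
      simpa using this
    have hBtail : B ≤ ∑' i, g (i + m) := by
      have hsum : Summable (fun i => g (i + m)) := (summable_nat_add_iff m).2 hs
      calc B = ∑ i ∈ Finset.range (m + 1), g (i + m) := by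
              refine Finset.sum_congr rfl fun i _ => ?_
              simp [hg]; congr 1; push_cast; ring
        _ ≤ ∑' i, g (i + m) := Summable.sum_le_tsum _ (fun i _ => (hpos _).le) hsum
    have h3 : M * B < δ 0 := by
      have h4 : M * B < M * (δ 0 / M) :=
        mul_lt_mul_of_pos_left (lt_of_le_of_lt hBtail hm) hM0
      rwa [mul_div_cancel₀ _ (ne_of_gt hM0)] at h4
    linarith
end

section
/- Let f_n : ℝ → ℝ be a sequence of functions converging uniformly on every compact subset of ℝ to a continuous function f_∞ : ℝ → ℝ, let h_n : ℝ → ℝ be monotone nondecreasing for each n, and let λ_n > 0 with λ_n → ∞. Assume that for each n, h_n(x) = f_n(x) whenever λ_n·x ∈ ℤ. Then h_n → f_∞ uniformly on every compact interval of ℝ. -/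
open Filter

theorem grid_agreement_uniform_convergence (f : ℕ → ℝ → ℝ) (finf : ℝ → ℝ)
    (h : ℕ → ℝ → ℝ) (lam : ℕ → ℝ)
    (hf : ∀ K : Set ℝ, IsCompact K → TendstoUniformlyOn f finf atTop K)
    (hfinf : Continuous finf)
    (hmono : ∀ n, Monotone (h n))
    (hlam_pos : ∀ n, 0 < lam n)
    (hlam : Tendsto lam atTop atTop)
    (hgrid : ∀ (n : ℕ) (x : ℝ), (∃ m : ℤ, lam n * x = (m : ℝ)) → h n x = f n x) :
    ∀ a b : ℝ, TendstoUniformlyOn h finf atTop (Set.Icc a b) := by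
  intro a b
  rw [Metric.tendstoUniformlyOn_iff]
  intro ε hε
  have hKc : IsCompact (Set.Icc (a-1) (b+1)) := isCompact_Icc
  have hfu : UniformContinuousOn finf (Set.Icc (a-1) (b+1)) :=
    hKc.uniformContinuousOn_of_continuous hfinf.continuousOn
  rw [Metric.uniformContinuousOn_iff] at hfu
  obtain ⟨δ, hδ, hδ'⟩ := hfu (ε/3) (by linarith)
  have h1 : ∀ᶠ n in atTop, ∀ x ∈ Set.Icc (a-1) (b+1), dist (finf x) (f n x) < ε/3 :=
    (Metric.tendstoUniformlyOn_iff.mp (hf _ hKc)) (ε/3) (by linarith)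
  have h2 : ∀ᶠ n in atTop, max (1/δ) 1 < lam n := hlam.eventually (eventually_gt_atTop _)
  filter_upwards [h1, h2] with n hn1 hn2
  intro x hx
  have hL := hlam_pos n
  have hL1 : (1:ℝ) < lam n := lt_of_le_of_lt (le_max_right _ _) hn2
  have hinv1 : 1 / lam n < 1 := by rw [div_lt_one hL]; exact hL1
  have hinvδ : 1 / lam n < δ := by
    rw [div_lt_iff₀ hL]
    have h1δ : 1 / δ < lam n := lt_of_le_of_lt (le_max_left _ _) hn2
    rw [div_lt_iff₀ hδ] at h1δ
    linarith
  set p : ℝ := (⌊lam n * x⌋ : ℝ) / lam n with hp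
  set q : ℝ := (⌈lam n * x⌉ : ℝ) / lam n with hq
  have hpx : p ≤ x := by
    rw [hp, div_le_iff₀ hL, mul_comm]; exact Int.floor_le _
  have hxq : x ≤ q := by
    rw [hq, le_div_iff₀ hL, mul_comm]; exact Int.le_ceil _
  have hxp : x < p + 1 / lam n := by
    rw [hp, ← add_div, lt_div_iff₀ hL, mul_comm]
    exact Int.lt_floor_add_one _
  have hqx : q < x + 1 / lam n := by
    rw [hq, div_lt_iff₀ hL, add_mul, div_mul_cancel₀ _ (ne_of_gt hL), mul_comm]
    exact Int.ceil_lt_add_one _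
  have hxK : x ∈ Set.Icc (a-1) (b+1) := ⟨by linarith [hx.1], by linarith [hx.2]⟩
  have hpK : p ∈ Set.Icc (a-1) (b+1) := ⟨by linarith [hx.1], by linarith [hx.2]⟩
  have hqK : q ∈ Set.Icc (a-1) (b+1) := ⟨by linarith [hx.1], by linarith [hx.2]⟩
  have hhp : h n p = f n p := hgrid n p ⟨⌊lam n * x⌋, by
    rw [hp]; field_simp⟩
  have hhq : h n q = f n q := hgrid n q ⟨⌈lam n * x⌉, by
    rw [hq]; field_simp⟩
  have e1 : dist (finf p) (f n p) < ε/3 := hn1 p hpK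
  have e2 : dist (finf q) (f n q) < ε/3 := hn1 q hqK
  have e3 : dist (finf x) (finf p) < ε/3 := by
    apply hδ' x hxK p hpK
    rw [Real.dist_eq, abs_of_nonneg (by linarith)]
    linarith
  have e4 : dist (finf x) (finf q) < ε/3 := by
    apply hδ' x hxK q hqK
    rw [Real.dist_eq, abs_of_nonpos (by linarith)]
    linarith
  have lo : h n p ≤ h n x := hmono n hpx
  have hi : h n x ≤ h n q := hmono n hxq
  rw [Real.dist_eq] at e1 e2 e3 e4 ⊢
  rw [abs_lt] at e1 e2 e3 e4
  rw [abs_lt]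
  constructor <;> [nlinarith [hhp, hhq]; nlinarith [hhp, hhq]]
end

section
/- Let M ≥ 1 and let δ : ℤ → ℝ be a sequence with δ n > 0 for all n that satisfies the quasisymmetric shear condition with constant M. Then the piecewise linear developing map h_δ : ℝ → ℝ is a strictly increasing continuous bijection of ℝ onto ℝ (in particular, a homeomorphism of ℝ). -/
lemma Hmap_nonneg_eq (δ : ℤ → ℝ) (n : ℕ) :
    Hmap δ (n : ℤ) = ∑ j ∈ Finset.range n, δ j := by
  simp [Hmap]

lemma Hmap_neg_eq (δ : ℤ → ℝ) (n : ℕ) :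
    Hmap δ (-(n : ℤ)) = -∑ j ∈ Finset.range n, δ (-(n : ℤ) + j) := by
  rcases Nat.eq_zero_or_pos n with h | h
  · subst h; simp [Hmap]
  · rw [Hmap, if_neg (by omega)]
    simp

lemma Hmap_le (δ : ℤ → ℝ) (hpos : ∀ n, 0 < δ n) {a b : ℤ} (h : a ≤ b) :
    Hmap δ a ≤ Hmap δ b := by
  obtain ⟨k, rfl⟩ : ∃ k : ℕ, b = a + k := ⟨(b - a).toNat, by omega⟩
  clear h
  induction k with
  | zero => simp
  | succ k ih =>
    rw [show a + ((k + 1 : ℕ) : ℤ) = (a + (k : ℕ)) + 1 by push_cast; ring, Hmap_succ]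
    linarith [hpos (a + (k : ℕ))]

lemma hdev_lt_next (δ : ℤ → ℝ) (hpos : ∀ n, 0 < δ n) (x : ℝ) :
    hdev δ x < Hmap δ (⌊x⌋ + 1) := by
  rw [Hmap_succ, hdev]
  have h1 : x - (⌊x⌋ : ℝ) < 1 := by linarith [Int.lt_floor_add_one x]
  nlinarith [hpos ⌊x⌋]

lemma le_hdev (δ : ℤ → ℝ) (hpos : ∀ n, 0 < δ n) (x : ℝ) :
    Hmap δ ⌊x⌋ ≤ hdev δ x := by
  rw [hdev]
  nlinarith [hpos ⌊x⌋, Int.floor_le x]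

lemma hdev_strictMono (δ : ℤ → ℝ) (hpos : ∀ n, 0 < δ n) : StrictMono (hdev δ) := by
  intro x y hxy
  rcases eq_or_lt_of_le (Int.floor_le_floor hxy.le) with hf | hf
  · rw [hdev, hdev, ← hf]
    nlinarith [hpos ⌊x⌋]
  · calc hdev δ x < Hmap δ (⌊x⌋ + 1) := hdev_lt_next δ hpos x
      _ ≤ Hmap δ ⌊y⌋ := Hmap_le δ hpos (by omega)
      _ ≤ hdev δ y := le_hdev δ hpos y

/-- The partial sums of the forward side grow beyond any bound. -/
lemma sum_unbounded (M : ℝ) (hM : 1 ≤ M) (δ : ℤ → ℝ)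
    (hpos : ∀ n, 0 < δ n) (hshear : ShearQS δ M) (C : ℝ) :
    ∃ n : ℕ, C < ∑ j ∈ Finset.range n, δ j := by
  have hM0 : (0 : ℝ) < M := lt_of_lt_of_le one_pos hM
  set P : ℕ → ℝ := fun n => ∑ j ∈ Finset.range n, δ j with hP
  have hPpos : ∀ n : ℕ, 1 ≤ n → δ 0 ≤ P n := by
    intro n hn
    have : δ ((0 : ℕ) : ℤ) ≤ ∑ j ∈ Finset.range n, δ (j : ℤ) := by
      exact Finset.single_le_sum (f := fun j : ℕ => δ (j : ℤ))
        (fun i _ => (hpos i).le) (Finset.mem_range.mpr hn)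
    simpa [hP] using this
  have step : ∀ n : ℕ, 1 ≤ n → P n + δ 0 / M ≤ P (2 * n) := by
    intro n hn
    obtain ⟨hlo, _⟩ := hshear (n : ℤ) (n - 1)
    have hk1 : n - 1 + 1 = n := by omega
    rw [hk1] at hlo
    have hB : (∑ i ∈ Finset.range n, δ ((n : ℤ) - 1 - (i : ℤ))) = P n := by
      simp only [hP]
      rw [← Finset.sum_range_reflect (fun j => δ ((n : ℤ) - 1 - (j : ℤ))) n]
      apply Finset.sum_congr rfl
      intro i hi
      have : i < n := Finset.mem_range.mp hi
      congr 1
      omega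
    have hA : (∑ i ∈ Finset.range n, δ ((n : ℤ) + (i : ℤ))) = P (2 * n) - P n := by
      have h2 : P (2 * n) = P n + ∑ i ∈ Finset.range n, δ ((n : ℤ) + (i : ℤ)) := by
        simp only [hP]
        rw [← Finset.sum_range_add_sum_Ico (fun j : ℕ => δ (j : ℤ)) (by omega : n ≤ 2 * n),
          Finset.sum_Ico_eq_sum_range]
        simp only [show 2 * n - n = n by omega]
        push_cast
        ring
      linarith
    rw [hB, hA] at hlo
    have hBpos : (0 : ℝ) < P n := lt_of_lt_of_le (hpos 0) (hPpos n hn)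
    rw [div_le_div_iff₀ hM0 hBpos] at hlo
    have hd0 : δ 0 / M ≤ P (2 * n) - P n := by
      rw [div_le_iff₀ hM0]
      nlinarith [hPpos n hn]
    linarith
  -- iterate the step
  have key : ∀ k : ℕ, ∃ n : ℕ, 1 ≤ n ∧ δ 0 + k * (δ 0 / M) ≤ P n := by
    intro k
    induction k with
    | zero =>
      refine ⟨1, le_refl _, ?_⟩
      simp [hP]
    | succ k ih =>
      obtain ⟨n, hn1, hn⟩ := ih
      refine ⟨2 * n, by omega, ?_⟩
      have := step n hn1
      push_cast
      linarith
  have hcpos : 0 < δ 0 / M := div_pos (hpos 0) hM0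
  obtain ⟨k, hk⟩ := exists_nat_gt ((C - δ 0) / (δ 0 / M))
  obtain ⟨n, _, hn⟩ := key k
  refine ⟨n, ?_⟩
  have : C - δ 0 < k * (δ 0 / M) := by
    rw [div_lt_iff₀ hcpos] at hk
    linarith
  exact lt_of_lt_of_le (by linarith) hn

lemma Hmap_unbounded_above (M : ℝ) (hM : 1 ≤ M) (δ : ℤ → ℝ)
    (hpos : ∀ n, 0 < δ n) (hshear : ShearQS δ M) (C : ℝ) :
    ∃ n : ℤ, C < Hmap δ n := by
  obtain ⟨n, hn⟩ := sum_unbounded M hM δ hpos hshear C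
  exact ⟨(n : ℤ), by rw [Hmap_nonneg_eq]; exact hn⟩

lemma Hmap_unbounded_below (M : ℝ) (hM : 1 ≤ M) (δ : ℤ → ℝ)
    (hpos : ∀ n, 0 < δ n) (hshear : ShearQS δ M) (C : ℝ) :
    ∃ n : ℤ, Hmap δ n < C := by
  have hM0 : (0 : ℝ) < M := lt_of_lt_of_le one_pos hM
  obtain ⟨n, hn⟩ := sum_unbounded M hM δ hpos hshear (M * (-C) + M * δ 0)
  -- use m = n + 1
  set m := n + 1 with hm
  have hPm : M * (-C) < ∑ j ∈ Finset.range m, δ j := by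
    have : (∑ j ∈ Finset.range n, δ j) ≤ ∑ j ∈ Finset.range m, δ j := by
      apply Finset.sum_le_sum_of_subset_of_nonneg
      · exact Finset.range_subset_range.mpr (by omega)
      · exact fun i _ _ => (hpos i).le
    nlinarith [mul_pos hM0 (hpos 0)]
  obtain ⟨_, hhi⟩ := hshear 0 n
  have hA : (∑ i ∈ Finset.range (n + 1), δ ((0 : ℤ) + (i : ℤ))) = ∑ j ∈ Finset.range m, δ j := by
    apply Finset.sum_congr rfl
    intro i _
    congr 1
    omega
  have hB : (∑ i ∈ Finset.range (n + 1), δ ((0 : ℤ) - 1 - (i : ℤ)))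
      = ∑ j ∈ Finset.range m, δ (-(m : ℤ) + j) := by
    rw [← Finset.sum_range_reflect (fun j => δ (-(m : ℤ) + (j : ℤ))) m]
    apply Finset.sum_congr rfl
    intro i hi
    have : i < m := Finset.mem_range.mp hi
    congr 1
    omega
  rw [hA, hB] at hhi
  have hBpos : (0 : ℝ) < ∑ j ∈ Finset.range m, δ (-(m : ℤ) + j) := by
    apply Finset.sum_pos (fun i _ => hpos _)
    exact ⟨0, Finset.mem_range.mpr (by omega)⟩
  rw [div_le_iff₀ hBpos] at hhi
  refine ⟨-(m : ℤ), ?_⟩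
  rw [Hmap_neg_eq]
  nlinarith

lemma hdev_surjective (M : ℝ) (hM : 1 ≤ M) (δ : ℤ → ℝ)
    (hpos : ∀ n, 0 < δ n) (hshear : ShearQS δ M) :
    Function.Surjective (hdev δ) := by
  intro y
  have Hbdd : ∃ b : ℤ, ∀ z : ℤ, Hmap δ z ≤ y → z ≤ b := by
    obtain ⟨N, hN⟩ := Hmap_unbounded_above M hM δ hpos hshear y
    refine ⟨N, fun z hz => ?_⟩
    by_contra h
    exact absurd (le_trans (Hmap_le δ hpos (by omega : N ≤ z)) hz) (not_le.mpr hN)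
  have Hinh : ∃ z : ℤ, Hmap δ z ≤ y := by
    obtain ⟨n, hn⟩ := Hmap_unbounded_below M hM δ hpos hshear y
    exact ⟨n, hn.le⟩
  obtain ⟨n, hn, hmax⟩ := Int.exists_greatest_of_bdd Hbdd Hinh
  have hy1 : y < Hmap δ (n + 1) := by
    by_contra h
    have := hmax (n + 1) (not_lt.mp h)
    omega
  rw [Hmap_succ] at hy1
  set t : ℝ := (y - Hmap δ n) / δ n with ht
  have ht0 : 0 ≤ t := div_nonneg (by linarith) (hpos n).le
  have ht1 : t < 1 := (div_lt_one (hpos n)).mpr (by linarith)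
  refine ⟨(n : ℝ) + t, ?_⟩
  have hfl : ⌊(n : ℝ) + t⌋ = n := by
    rw [Int.floor_eq_iff]
    exact ⟨by linarith, by push_cast; linarith⟩
  rw [hdev, hfl]
  have : δ n * t = y - Hmap δ n := by
    rw [ht, mul_div_cancel₀]
    exact (hpos n).ne'
  rw [show (n : ℝ) + t - (n : ℝ) = t by ring, this]
  ring

theorem developing_map_homeomorphism (M : ℝ) (hM : 1 ≤ M) (δ : ℤ → ℝ)
    (hpos : ∀ n, 0 < δ n) (hshear : ShearQS δ M) :
    StrictMono (hdev δ) ∧ Continuous (hdev δ) ∧ Function.Bijective (hdev δ) := by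
  have hmono := hdev_strictMono δ hpos
  have hsurj := hdev_surjective M hM δ hpos hshear
  refine ⟨hmono, ?_, hmono.injective, hsurj⟩
  have h := (StrictMono.orderIsoOfSurjective (hdev δ) hmono hsurj).toHomeomorph.continuous
  simpa using h
end
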